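/- Let d, e, f be positive natural numbers and let t : Fin d → Fin e → ℝ and u : Fin d → Fin f → ℝ be families of real numbers (the evaluated terms of a formula in conjunctive normal form with order inequalities). Then the conjunction ∀ i : Fin d, ((∃ j : Fin e, t i j = 0) ∨ (∃ k : Fin f, u i k > 0)) holds if and only if there exists r : Fin d → ℝ such that ∑_{i : Fin d} ((∏_{j : Fin e} t i j) · (∏_{k : Fin f} (1 − (r i)^2 · u i k)))^2 = 0. -/

import Mathlib

theorem boolean_elim_Ed_over_R (d e f : ℕ) (hd : 0 < d) (he : 0 < e) (hf : 0 < f)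
    (t : Fin d → Fin e → ℝ) (u : Fin d → Fin f → ℝ) :
    (∀ i : Fin d, (∃ j : Fin e, t i j = 0) ∨ (∃ k : Fin f, u i k > 0)) ↔
    (∃ r : Fin d → ℝ,
      ∑ i : Fin d,
        ((∏ j : Fin e, t i j) * (∏ k : Fin f, (1 - (r i) ^ 2 * u i k))) ^ 2 = 0) := by
  constructor
  · intro h
    have : ∀ i : Fin d, ∃ ri : ℝ,
        ((∏ j : Fin e, t i j) * (∏ k : Fin f, (1 - ri ^ 2 * u i k))) = 0 := by
      intro i
      rcases h i with ⟨j, hj⟩ | ⟨k, hk⟩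
      · exact ⟨0, by rw [Finset.prod_eq_zero (Finset.mem_univ j) hj, zero_mul]⟩
      · refine ⟨Real.sqrt (u i k)⁻¹, ?_⟩
        have : (1 - (Real.sqrt (u i k)⁻¹) ^ 2 * u i k) = 0 := by
          rw [Real.sq_sqrt (by positivity)]
          field_simp
          norm_num
        rw [Finset.prod_eq_zero (Finset.mem_univ k) this, mul_zero]
    choose r hr using this
    refine ⟨r, ?_⟩
    simp only [hr]
    simp
  · rintro ⟨r, hr⟩
    have h0 : ∀ i : Fin d,
        ((∏ j : Fin e, t i j) * (∏ k : Fin f, (1 - (r i) ^ 2 * u i k))) ^ 2 = 0 := by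
      intro i
      have := Finset.sum_eq_zero_iff_of_nonneg (fun i _ => sq_nonneg _) |>.mp hr i (Finset.mem_univ i)
      exact this
    intro i
    have h1 := pow_eq_zero_iff (n := 2) (by norm_num) |>.mp (h0 i)
    rcases mul_eq_zero.mp h1 with h2 | h2
    · left
      obtain ⟨j, _, hj⟩ := Finset.prod_eq_zero_iff.mp h2
      exact ⟨j, hj⟩
    · right
      obtain ⟨k, _, hk⟩ := Finset.prod_eq_zero_iff.mp h2
      have hk' : (r i) ^ 2 * u i k = 1 := by linarith
      have hr0 : r i ≠ 0 := by
        rintro h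
        rw [h] at hk'
        norm_num at hk'
      refine ⟨k, ?_⟩
      have hpos : (0:ℝ) < (r i) ^ 2 := by positivity
      nlinarith [hk']
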